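/- The conditional variance of the standardized outcome given selection equals 1 − ρ² λ(μ₂)(μ₂ + λ(μ₂)), where λ(x) = φ(x)/Φ(x) is the inverse Mills ratio; that is, ∫ z(y)² f(y) dy − (∫ z(y) f(y) dy)² = 1 − ρ² λ(μ₂)(μ₂ + λ(μ₂)), with f(y) = (1/(σ Φ(μ₂))) φ(z(y)) Φ(ζ(y)). -/

import Mathlib

open MeasureTheory Set

/-- Standard normal density. -/
noncomputable def phi (t : ℝ) : ℝ := Real.exp (-(t ^ 2) / 2) / Real.sqrt (2 * Real.pi)

/-- Standard normal cumulative distribution function. -/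
noncomputable def Phi (x : ℝ) : ℝ := ∫ t in Set.Iic x, phi t

open Filter Real

lemma sqrt2pi_pos : 0 < Real.sqrt (2 * Real.pi) := Real.sqrt_pos.2 (by positivity)

lemma phi_pos (t : ℝ) : 0 < phi t := by unfold phi; positivity

lemma phi_nonneg (t : ℝ) : 0 ≤ phi t := (phi_pos t).le

lemma phi_le (t : ℝ) : phi t ≤ (Real.sqrt (2 * Real.pi))⁻¹ := by
  unfold phi
  rw [div_eq_mul_inv]
  have h1 : Real.exp (-(t ^ 2) / 2) ≤ 1 := by
    rw [Real.exp_le_one_iff]; nlinarith [sq_nonneg t]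
  nlinarith [inv_nonneg.2 sqrt2pi_pos.le]

lemma phi_neg (t : ℝ) : phi (-t) = phi t := by simp [phi]

lemma continuous_phi : Continuous phi := by
  unfold phi; fun_prop

lemma hasDerivAt_phi (t : ℝ) : HasDerivAt phi (-t * phi t) t := by
  have h : HasDerivAt (fun t : ℝ => -(t ^ 2) / 2) (-t) t := by
    have := ((hasDerivAt_pow 2 t).neg.div_const 2)
    simpa using this.congr_deriv (by ring)
  have h2 := (h.exp).div_const (Real.sqrt (2 * Real.pi))
  refine h2.congr_deriv ?_
  unfold phi; ring

lemma phi_eq_gaussian : phi = ProbabilityTheory.gaussianPDFReal 0 1 := by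
  funext t
  simp [phi, ProbabilityTheory.gaussianPDFReal, div_eq_mul_inv, mul_comm]

lemma integrable_phi : Integrable phi := by
  rw [phi_eq_gaussian]; exact ProbabilityTheory.integrable_gaussianPDFReal 0 1

lemma integral_phi : ∫ t, phi t = 1 := by
  rw [phi_eq_gaussian]
  exact ProbabilityTheory.integral_gaussianPDFReal_eq_one 0 one_ne_zero

lemma integrable_mul_phi : Integrable (fun t : ℝ => t * phi t) := by
  have h := integrable_rpow_mul_exp_neg_mul_sq (b := (1/2 : ℝ)) one_half_pos
    (s := 1) (by norm_num)
  simp only [Real.rpow_one] at h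
  apply (h.const_mul ((Real.sqrt (2 * Real.pi))⁻¹)).congr
  refine ae_of_all _ fun t => ?_
  dsimp only
  unfold phi
  rw [show -(1/2 : ℝ) * t ^ 2 = -(t ^ 2) / 2 by ring]
  ring

lemma integrable_abs_mul_phi : Integrable (fun t : ℝ => |t| * phi t) := by
  apply integrable_mul_phi.abs.congr
  refine ae_of_all _ fun t => ?_
  dsimp only
  rw [abs_mul, abs_of_nonneg (phi_nonneg t)]

lemma integrable_sq_mul_phi : Integrable (fun t : ℝ => t ^ 2 * phi t) := by
  have h := integrable_rpow_mul_exp_neg_mul_sq (b := (1/2 : ℝ)) one_half_pos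
    (s := 2) (by norm_num)
  have h2 : ∀ x : ℝ, x ^ (2 : ℝ) = x ^ 2 := fun x => by
    rw [show (2 : ℝ) = ((2 : ℕ) : ℝ) by norm_num, Real.rpow_natCast]
  simp only [h2] at h
  apply (h.const_mul ((Real.sqrt (2 * Real.pi))⁻¹)).congr
  refine ae_of_all _ fun t => ?_
  dsimp only
  unfold phi
  rw [show -(1/2 : ℝ) * t ^ 2 = -(t ^ 2) / 2 by ring]
  ring

lemma integral_mul_phi : ∫ t : ℝ, t * phi t = 0 := by
  have h := MeasureTheory.Measure.integral_comp_mul_left (fun t : ℝ => t * phi t) (-1)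
  simp only [neg_one_mul, phi_neg, neg_mul, integral_neg, one_mul] at h
  simp only [abs_inv, abs_neg, abs_one, inv_one, one_smul] at h
  linarith
open Topology

lemma Phi_nonneg (x : ℝ) : 0 ≤ Phi x :=
  setIntegral_nonneg measurableSet_Iic fun t _ => phi_nonneg t

lemma Phi_le_one (x : ℝ) : Phi x ≤ 1 := by
  rw [Phi, ← integral_phi]
  exact setIntegral_le_integral integrable_phi (ae_of_all _ phi_nonneg)

lemma abs_Phi_le_one (x : ℝ) : |Phi x| ≤ 1 :=
  abs_le.2 ⟨by linarith [Phi_nonneg x], Phi_le_one x⟩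

lemma Phi_pos (x : ℝ) : 0 < Phi x := by
  rw [Phi]
  rw [setIntegral_pos_iff_support_of_nonneg_ae (ae_of_all _ phi_nonneg)
    integrable_phi.integrableOn]
  have : Function.support phi = Set.univ := by
    ext t; simp [Function.support, (phi_pos t).ne']
  rw [this, Set.univ_inter]
  simp [Real.volume_Iic]

lemma hasDerivAt_Phi (x : ℝ) : HasDerivAt Phi (phi x) x := by
  have hPhi : Phi = fun u => Phi 0 + ∫ t in (0:ℝ)..u, phi t := by
    funext u
    rw [← intervalIntegral.integral_Iic_sub_Iic integrable_phi.integrableOn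
      integrable_phi.integrableOn]
    unfold Phi; ring
  rw [hPhi]
  exact (intervalIntegral.integral_hasDerivAt_right
    (integrable_phi.intervalIntegrable)
    (continuous_phi.stronglyMeasurable.stronglyMeasurableAtFilter)
    continuous_phi.continuousAt).const_add (Phi 0)

lemma continuous_Phi : Continuous Phi :=
  continuous_iff_continuousAt.2 fun x => (hasDerivAt_Phi x).continuousAt

lemma Phi_indicator (x : ℝ) : Phi x = ∫ t, (Set.Iic x).indicator phi t :=
  (integral_indicator measurableSet_Iic).symm

lemma tendsto_Phi_atBot : Tendsto Phi atBot (𝓝 0) := by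
  have h : Tendsto (fun x : ℝ => ∫ t, (Set.Iic x).indicator phi t) atBot
      (𝓝 (∫ _t : ℝ, (0:ℝ))) := by
    apply tendsto_integral_filter_of_dominated_convergence phi
    · exact Eventually.of_forall fun x =>
        (continuous_phi.stronglyMeasurable.indicator measurableSet_Iic).aestronglyMeasurable
    · refine Eventually.of_forall fun x => ae_of_all _ fun t => ?_
      by_cases h : t ∈ Set.Iic x
      · simp [Set.indicator_of_mem h, Real.norm_eq_abs, abs_of_nonneg (phi_nonneg t)]
      · simp [Set.indicator_of_notMem h, phi_nonneg t]
    · exact integrable_phi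
    · refine ae_of_all _ fun t => ?_
      apply tendsto_const_nhds.congr'
      filter_upwards [eventually_lt_atBot t] with x hx
      have : t ∉ Set.Iic x := by simp [not_le.2 hx]
      simp [Set.indicator_of_notMem this]
  simp only [integral_zero] at h
  exact h.congr fun x => (Phi_indicator x).symm

lemma tendsto_Phi_atTop : Tendsto Phi atTop (𝓝 1) := by
  have h : Tendsto (fun x : ℝ => ∫ t, (Set.Iic x).indicator phi t) atTop
      (𝓝 (∫ t : ℝ, phi t)) := by
    apply tendsto_integral_filter_of_dominated_convergence phi
    · exact Eventually.of_forall fun x =>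
        (continuous_phi.stronglyMeasurable.indicator measurableSet_Iic).aestronglyMeasurable
    · refine Eventually.of_forall fun x => ae_of_all _ fun t => ?_
      by_cases h : t ∈ Set.Iic x
      · simp [Set.indicator_of_mem h, Real.norm_eq_abs, abs_of_nonneg (phi_nonneg t)]
      · simp [Set.indicator_of_notMem h, phi_nonneg t]
    · exact integrable_phi
    · refine ae_of_all _ fun t => ?_
      apply tendsto_const_nhds.congr'
      filter_upwards [eventually_ge_atTop t] with x hx
      have : t ∈ Set.Iic x := by simpa using hx
      simp [Set.indicator_of_mem this]
  rw [integral_phi] at h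
  exact h.congr fun x => (Phi_indicator x).symm

lemma tendsto_sq_div : Tendsto (fun t : ℝ => -(t ^ 2) / 2) atTop atBot := by
  apply Tendsto.atBot_div_const two_pos
  exact tendsto_neg_atBot_iff.2 (tendsto_pow_atTop two_ne_zero)

lemma tendsto_phi_atTop : Tendsto phi atTop (𝓝 0) := by
  have h := (Real.tendsto_exp_atBot).comp tendsto_sq_div
  have h2 := h.div_const (Real.sqrt (2 * Real.pi))
  rw [zero_div] at h2
  exact h2

lemma tendsto_phi_atBot : Tendsto phi atBot (𝓝 0) := by
  have := tendsto_phi_atTop.comp tendsto_neg_atBot_atTop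
  exact this.congr fun t => phi_neg t

lemma tendsto_mul_phi_atTop : Tendsto (fun t : ℝ => t * phi t) atTop (𝓝 0) := by
  have h := (rpow_mul_exp_neg_mul_sq_isLittleO_exp_neg (b := (1/2:ℝ)) one_half_pos 1)
  have hin : Tendsto (fun x : ℝ => -(1/2 * x)) atTop atBot :=
    tendsto_neg_atTop_atBot.comp (tendsto_id.const_mul_atTop one_half_pos)
  have h0 : Tendsto (fun x : ℝ => Real.exp (-(1/2) * x)) atTop (𝓝 0) := by
    have := Real.tendsto_exp_atBot.comp hin
    apply this.congr fun x => by rw [Function.comp]; ring_nf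
  have h1 : Tendsto (fun x : ℝ => x ^ (1:ℝ) * Real.exp (-(1/2) * x ^ 2)) atTop (𝓝 0) :=
    h.trans_tendsto h0
  simp only [Real.rpow_one] at h1
  have h2 := h1.div_const (Real.sqrt (2 * Real.pi))
  rw [zero_div] at h2
  apply h2.congr'
  filter_upwards with t
  simp only [phi, show -(1/2:ℝ) * t ^ 2 = -(t^2)/2 by ring]
  ring

lemma tendsto_mul_phi_atBot : Tendsto (fun t : ℝ => t * phi t) atBot (𝓝 0) := by
  have := (tendsto_mul_phi_atTop.comp tendsto_neg_atBot_atTop).neg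
  simp only [neg_zero] at this
  apply this.congr'
  filter_upwards with t
  simp [Function.comp, phi_neg]
lemma phi_mul_phi {b q : ℝ} (hq : q ^ 2 = 1 + b ^ 2) (c t : ℝ) :
    phi t * phi (q * c + b * t) = phi c * phi (q * t + b * c) := by
  unfold phi
  rw [div_mul_div_comm, div_mul_div_comm, ← Real.exp_add, ← Real.exp_add]
  congr 2
  linear_combination ((t ^ 2 - c ^ 2) / 2) * hq

lemma integral_phi_affine {q : ℝ} (hq : 0 < q) (c : ℝ) :
    ∫ t : ℝ, phi (q * t + c) = 1 / q := by
  have h : (fun t : ℝ => phi (q * t + c)) = fun t => (fun y => phi (y + c)) (q * t) := rfl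
  rw [h, MeasureTheory.Measure.integral_comp_mul_left (fun y => phi (y + c)) q,
    integral_add_right_eq_self phi c, integral_phi]
  rw [abs_of_pos (inv_pos.2 hq), smul_eq_mul, mul_one, one_div]

lemma integral_mul_phi_affine {q : ℝ} (hq : 0 < q) (c : ℝ) :
    ∫ t : ℝ, t * phi (q * t + c) = -c / q ^ 2 := by
  have h : (fun t : ℝ => t * phi (q * t + c))
      = fun t => (fun y => (y / q) * phi (y + c)) (q * t) := by
    funext t
    simp only
    rw [mul_div_cancel_left₀ _ hq.ne']
  rw [h, MeasureTheory.Measure.integral_comp_mul_left (fun y => (y / q) * phi (y + c)) q]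
  have h2 : (fun y : ℝ => (y / q) * phi (y + c))
      = fun y => (fun u => ((u - c) / q) * phi u) (y + c) := by
    funext y; simp only; ring_nf
  rw [h2, integral_add_right_eq_self (fun u => ((u - c) / q) * phi u) c]
  have h3 : (fun u : ℝ => ((u - c) / q) * phi u)
      = fun u => (1 / q) * (u * phi u) - (c / q) * phi u := by
    funext u; ring
  rw [h3, integral_sub ((integrable_mul_phi.const_mul _)) (integrable_phi.const_mul _),
    integral_const_mul, integral_const_mul, integral_mul_phi, integral_phi,
    abs_of_pos (inv_pos.2 hq), smul_eq_mul]
  field_simp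
  ring
lemma hv_deriv (a b t : ℝ) :
    HasDerivAt (fun t : ℝ => Phi (a + b * t)) (phi (a + b * t) * b) t := by
  have h : HasDerivAt (fun t : ℝ => a + b * t) b t := by
    simpa using ((hasDerivAt_id t).const_mul b).const_add a
  exact (hasDerivAt_Phi (a + b * t)).comp t h

lemma phi_mul_phi' {b q : ℝ} (hq : q ^ 2 = 1 + b ^ 2) (hq0 : 0 < q) (a t : ℝ) :
    phi t * phi (a + b * t) = phi (a / q) * phi (q * t + b * (a / q)) := by
  have hqa : q * (a / q) = a := by field_simp
  have := phi_mul_phi hq (a / q) t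
  rwa [hqa] at this

lemma int_phiphi {b q : ℝ} (hq : q ^ 2 = 1 + b ^ 2) (hq0 : 0 < q) (a : ℝ) :
    ∫ t : ℝ, phi t * phi (a + b * t) = phi (a / q) / q := by
  simp_rw [phi_mul_phi' hq hq0 a]
  rw [integral_const_mul, integral_phi_affine hq0]
  ring

lemma int_mul_phiphi {b q : ℝ} (hq : q ^ 2 = 1 + b ^ 2) (hq0 : 0 < q) (a : ℝ) :
    ∫ t : ℝ, t * (phi t * phi (a + b * t))
      = phi (a / q) * (-(b * (a / q)) / q ^ 2) := by
  have h : ∀ t : ℝ, t * (phi t * phi (a + b * t))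
      = phi (a / q) * (t * phi (q * t + b * (a / q))) := fun t => by
    rw [phi_mul_phi' hq hq0 a]; ring
  simp_rw [h]
  rw [integral_const_mul, integral_mul_phi_affine hq0]

lemma integrable_of_le_mul {f g : ℝ → ℝ} (hf : Continuous f) (hg : Integrable g)
    (h : ∀ t, ‖f t‖ ≤ g t) : Integrable f :=
  hg.mono' hf.aestronglyMeasurable (ae_of_all _ h)

lemma continuous_Phi_affine (a b : ℝ) : Continuous fun t : ℝ => Phi (a + b * t) :=
  continuous_Phi.comp (continuous_const.add (continuous_const.mul continuous_id))

lemma integrable_phiPhi (a b : ℝ) : Integrable fun t : ℝ => phi t * Phi (a + b * t) := by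
  refine integrable_of_le_mul (continuous_phi.mul (continuous_Phi_affine a b)) integrable_phi fun t => ?_
  rw [Real.norm_eq_abs, abs_mul, abs_of_nonneg (phi_nonneg t)]
  exact mul_le_of_le_one_right (phi_nonneg t) (abs_Phi_le_one _)

lemma integrable_mul_phiPhi (a b : ℝ) :
    Integrable fun t : ℝ => t * phi t * Phi (a + b * t) := by
  refine integrable_of_le_mul
    ((continuous_id.mul continuous_phi).mul (continuous_Phi_affine a b))
    integrable_abs_mul_phi fun t => ?_
  rw [Real.norm_eq_abs, abs_mul, abs_mul, abs_of_nonneg (phi_nonneg t)]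
  exact mul_le_of_le_one_right (mul_nonneg (abs_nonneg _) (phi_nonneg t)) (abs_Phi_le_one _)

lemma integrable_sqsub_phiPhi (a b : ℝ) :
    Integrable fun t : ℝ => (t ^ 2 - 1) * phi t * Phi (a + b * t) := by
  refine integrable_of_le_mul
    (((continuous_pow 2).sub continuous_const).mul continuous_phi |>.mul
      (continuous_Phi_affine a b))
    (integrable_sq_mul_phi.add integrable_phi) fun t => ?_
  rw [Real.norm_eq_abs, abs_mul, abs_mul, abs_of_nonneg (phi_nonneg t)]
  have h1 : |t ^ 2 - 1| ≤ t ^ 2 + 1 :=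
    abs_le.2 ⟨by nlinarith [sq_nonneg t], by nlinarith [sq_nonneg t]⟩
  calc |t ^ 2 - 1| * phi t * |Phi (a + b * t)|
      ≤ |t ^ 2 - 1| * phi t * 1 := by
        exact mul_le_mul_of_nonneg_left (abs_Phi_le_one _) (mul_nonneg (abs_nonneg _) (phi_nonneg t))
    _ = |t ^ 2 - 1| * phi t := by ring
    _ ≤ (t ^ 2 + 1) * phi t := mul_le_mul_of_nonneg_right h1 (phi_nonneg t)
    _ = t ^ 2 * phi t + phi t := by ring

lemma integrable_sq_phiPhi (a b : ℝ) :
    Integrable fun t : ℝ => t ^ 2 * phi t * Phi (a + b * t) := by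
  refine integrable_of_le_mul
    (((continuous_pow 2).mul continuous_phi).mul (continuous_Phi_affine a b))
    integrable_sq_mul_phi fun t => ?_
  rw [Real.norm_eq_abs, abs_mul, abs_mul, abs_of_nonneg (phi_nonneg t), abs_pow, sq_abs]
  exact mul_le_of_le_one_right (mul_nonneg (sq_nonneg t) (phi_nonneg t)) (abs_Phi_le_one _)

lemma integrable_phi_phiaff (a b : ℝ) :
    Integrable fun t : ℝ => -phi t * (phi (a + b * t) * b) := by
  refine integrable_of_le_mul
    ((continuous_phi.neg).mul ((continuous_phi.comp
      (continuous_const.add (continuous_const.mul continuous_id))).mul continuous_const))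
    (integrable_phi.const_mul ((Real.sqrt (2 * Real.pi))⁻¹ * |b|)) fun t => ?_
  rw [Real.norm_eq_abs, abs_mul, abs_neg, abs_of_nonneg (phi_nonneg t), abs_mul,
    abs_of_nonneg (phi_nonneg _)]
  calc phi t * (phi (a + b * t) * |b|)
      ≤ phi t * ((Real.sqrt (2 * Real.pi))⁻¹ * |b|) :=
        mul_le_mul_of_nonneg_left
          (mul_le_mul_of_nonneg_right (phi_le _) (abs_nonneg b)) (phi_nonneg t)
    _ = (Real.sqrt (2 * Real.pi))⁻¹ * |b| * phi t := by ring

lemma integrable_mulphi_phiaff (a b : ℝ) :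
    Integrable fun t : ℝ => -(t * phi t) * (phi (a + b * t) * b) := by
  refine integrable_of_le_mul
    (((continuous_id.mul continuous_phi).neg).mul ((continuous_phi.comp
      (continuous_const.add (continuous_const.mul continuous_id))).mul continuous_const))
    (integrable_abs_mul_phi.const_mul ((Real.sqrt (2 * Real.pi))⁻¹ * |b|)) fun t => ?_
  rw [Real.norm_eq_abs, abs_mul, abs_neg, abs_mul, abs_of_nonneg (phi_nonneg t), abs_mul,
    abs_of_nonneg (phi_nonneg _)]
  calc |t| * phi t * (phi (a + b * t) * |b|)
      ≤ |t| * phi t * ((Real.sqrt (2 * Real.pi))⁻¹ * |b|) :=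
        mul_le_mul_of_nonneg_left
          (mul_le_mul_of_nonneg_right (phi_le _) (abs_nonneg b))
          (mul_nonneg (abs_nonneg t) (phi_nonneg t))
    _ = (Real.sqrt (2 * Real.pi))⁻¹ * |b| * (|t| * phi t) := by ring

lemma tendsto_abs_mul_phi_atBot : Tendsto (fun t : ℝ => |t| * phi t) atBot (𝓝 0) := by
  have := tendsto_mul_phi_atBot.abs
  simp only [abs_zero] at this
  exact this.congr fun t => by rw [abs_mul, abs_of_nonneg (phi_nonneg t)]

lemma tendsto_abs_mul_phi_atTop : Tendsto (fun t : ℝ => |t| * phi t) atTop (𝓝 0) := by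
  have := tendsto_mul_phi_atTop.abs
  simp only [abs_zero] at this
  exact this.congr fun t => by rw [abs_mul, abs_of_nonneg (phi_nonneg t)]

lemma I1_eq {b q : ℝ} (hq : q ^ 2 = 1 + b ^ 2) (hq0 : 0 < q) (a : ℝ) :
    ∫ t : ℝ, t * phi t * Phi (a + b * t) = b / q * phi (a / q) := by
  have hu : ∀ t : ℝ, HasDerivAt (fun t : ℝ => -phi t) (t * phi t) t := fun t => by
    exact (hasDerivAt_phi t).neg.congr_deriv (by ring)
  have hv : ∀ t : ℝ, HasDerivAt (fun t : ℝ => Phi (a + b * t)) (phi (a + b * t) * b) t :=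
    hv_deriv a b
  have hbot : Tendsto (fun t : ℝ => -phi t * Phi (a + b * t)) atBot (𝓝 0) :=
    squeeze_zero_norm (fun t => by
      rw [Real.norm_eq_abs, abs_mul, abs_neg, abs_of_nonneg (phi_nonneg t)]
      exact mul_le_of_le_one_right (phi_nonneg t) (abs_Phi_le_one _)) tendsto_phi_atBot
  have htop : Tendsto (fun t : ℝ => -phi t * Phi (a + b * t)) atTop (𝓝 0) :=
    squeeze_zero_norm (fun t => by
      rw [Real.norm_eq_abs, abs_mul, abs_neg, abs_of_nonneg (phi_nonneg t)]
      exact mul_le_of_le_one_right (phi_nonneg t) (abs_Phi_le_one _)) tendsto_phi_atTop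
  have hparts := integral_mul_deriv_eq_deriv_mul (fun x _ => hu x) (fun x _ => hv x)
    (integrable_phi_phiaff a b) (integrable_mul_phiPhi a b) hbot htop
  have hL : ∫ t : ℝ, -phi t * (phi (a + b * t) * b) = -(b * (phi (a / q) / q)) := by
    have h : (fun t : ℝ => -phi t * (phi (a + b * t) * b))
        = fun t => -(b * (phi t * phi (a + b * t))) := by funext t; ring
    rw [h, integral_neg, integral_const_mul, int_phiphi hq hq0 a]
  rw [hL] at hparts
  have : ∫ t : ℝ, t * phi t * Phi (a + b * t) = b * (phi (a / q) / q) := by linarith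
  rw [this]; ring

lemma I2'_eq {b q : ℝ} (hq : q ^ 2 = 1 + b ^ 2) (hq0 : 0 < q) (a : ℝ) :
    ∫ t : ℝ, (t ^ 2 - 1) * phi t * Phi (a + b * t)
      = -((b / q) ^ 2 * (a / q) * phi (a / q)) := by
  have hu : ∀ t : ℝ, HasDerivAt (fun t : ℝ => -(t * phi t)) ((t ^ 2 - 1) * phi t) t := by
    intro t
    have h := ((hasDerivAt_id t).mul (hasDerivAt_phi t)).neg
    refine h.congr_deriv ?_
    simp; ring
  have hv : ∀ t : ℝ, HasDerivAt (fun t : ℝ => Phi (a + b * t)) (phi (a + b * t) * b) t :=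
    hv_deriv a b
  have hbot : Tendsto (fun t : ℝ => -(t * phi t) * Phi (a + b * t)) atBot (𝓝 0) :=
    squeeze_zero_norm (fun t => by
      rw [Real.norm_eq_abs, abs_mul, abs_neg, abs_mul, abs_of_nonneg (phi_nonneg t)]
      exact mul_le_of_le_one_right (mul_nonneg (abs_nonneg _) (phi_nonneg t)) (abs_Phi_le_one _))
      tendsto_abs_mul_phi_atBot
  have htop : Tendsto (fun t : ℝ => -(t * phi t) * Phi (a + b * t)) atTop (𝓝 0) :=
    squeeze_zero_norm (fun t => by
      rw [Real.norm_eq_abs, abs_mul, abs_neg, abs_mul, abs_of_nonneg (phi_nonneg t)]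
      exact mul_le_of_le_one_right (mul_nonneg (abs_nonneg _) (phi_nonneg t)) (abs_Phi_le_one _))
      tendsto_abs_mul_phi_atTop
  have hparts := integral_mul_deriv_eq_deriv_mul (fun x _ => hu x) (fun x _ => hv x)
    (integrable_mulphi_phiaff a b) (integrable_sqsub_phiPhi a b) hbot htop
  have hL : ∫ t : ℝ, -(t * phi t) * (phi (a + b * t) * b)
      = -(b * (phi (a / q) * (-(b * (a / q)) / q ^ 2))) := by
    have h : (fun t : ℝ => -(t * phi t) * (phi (a + b * t) * b))
        = fun t => -(b * (t * (phi t * phi (a + b * t)))) := by funext t; ring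
    rw [h, integral_neg, integral_const_mul, int_mul_phiphi hq hq0 a]
  rw [hL] at hparts
  have h2 : ∫ t : ℝ, (t ^ 2 - 1) * phi t * Phi (a + b * t)
      = b * (phi (a / q) * (-(b * (a / q)) / q ^ 2)) := by linarith
  rw [h2]; ring
lemma I0_eq {b q : ℝ} (hq : q ^ 2 = 1 + b ^ 2) (hq0 : 0 < q) (a : ℝ) :
    ∫ t : ℝ, phi t * Phi (a + b * t) = Phi (a / q) := by
  set G : ℝ → ℝ := fun x => ∫ t : ℝ, phi t * Phi (x + b * t) with hGdef
  have hGd : ∀ x : ℝ, HasDerivAt G (phi (x / q) / q) x := by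
    intro x
    have key := hasDerivAt_integral_of_dominated_loc_of_deriv_le (μ := volume)
      (F := fun x t => phi t * Phi (x + b * t)) (F' := fun x t => phi t * phi (x + b * t))
      (bound := fun t => (Real.sqrt (2 * Real.pi))⁻¹ * phi t)
      (x₀ := x) (s := Set.univ) Filter.univ_mem
      (Eventually.of_forall fun y =>
        (continuous_phi.mul (continuous_Phi_affine y b)).aestronglyMeasurable)
      (integrable_phiPhi x b)
      ((continuous_phi.mul (continuous_phi.comp
        (continuous_const.add (continuous_const.mul continuous_id)))).aestronglyMeasurable)
      (ae_of_all _ fun t y _ => by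
        rw [Real.norm_eq_abs, abs_mul, abs_of_nonneg (phi_nonneg t),
          abs_of_nonneg (phi_nonneg _)]
        calc phi t * phi (y + b * t) ≤ phi t * (Real.sqrt (2 * Real.pi))⁻¹ :=
              mul_le_mul_of_nonneg_left (phi_le _) (phi_nonneg t)
          _ = (Real.sqrt (2 * Real.pi))⁻¹ * phi t := by ring)
      (integrable_phi.const_mul _)
      (ae_of_all _ fun t y _ => by
        have h1 : HasDerivAt (fun y : ℝ => y + b * t) 1 y := (hasDerivAt_id y).add_const (b * t)
        have h2 := ((hasDerivAt_Phi (y + b * t)).comp y h1).const_mul (phi t)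
        simpa using h2)
    have hd := key.2
    rwa [int_phiphi hq hq0 x] at hd
  have hsub : ∀ x : ℝ, HasDerivAt (fun x : ℝ => G x - Phi (x / q)) 0 x := by
    intro x
    have h2 : HasDerivAt (fun x : ℝ => Phi (x / q)) (phi (x / q) * (1 / q)) x :=
      by
        have h := (hasDerivAt_Phi (x / q)).comp x ((hasDerivAt_id' x).div_const q)
        exact h
    have h3 := (hGd x).sub h2
    refine h3.congr_deriv ?_
    ring
  have hconst : ∀ x y : ℝ, G x - Phi (x / q) = G y - Phi (y / q) := fun x y =>
    is_const_of_deriv_eq_zero (fun u => (hsub u).differentiableAt)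
      (fun u => (hsub u).deriv) x y
  have hGbot : Tendsto G atBot (𝓝 0) := by
    have h : Tendsto (fun x : ℝ => ∫ t : ℝ, phi t * Phi (x + b * t)) atBot
        (𝓝 (∫ _t : ℝ, (0 : ℝ))) := by
      apply tendsto_integral_filter_of_dominated_convergence phi
      · exact Eventually.of_forall fun y =>
          (continuous_phi.mul (continuous_Phi_affine y b)).aestronglyMeasurable
      · refine Eventually.of_forall fun y => ae_of_all _ fun t => ?_
        rw [Real.norm_eq_abs, abs_mul, abs_of_nonneg (phi_nonneg t)]
        exact mul_le_of_le_one_right (phi_nonneg t) (abs_Phi_le_one _)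
      · exact integrable_phi
      · refine ae_of_all _ fun t => ?_
        have h2 : Tendsto (fun x : ℝ => Phi (x + b * t)) atBot (𝓝 0) :=
          tendsto_Phi_atBot.comp (tendsto_atBot_add_const_right _ (b * t) tendsto_id)
        simpa using h2.const_mul (phi t)
    simpa using h
  have hPbot : Tendsto (fun x : ℝ => Phi (x / q)) atBot (𝓝 0) :=
    tendsto_Phi_atBot.comp (tendsto_id.atBot_div_const hq0)
  have hlim : Tendsto (fun x : ℝ => G x - Phi (x / q)) atBot (𝓝 0) := by
    simpa using hGbot.sub hPbot
  have hconst' : Tendsto (fun _ : ℝ => G a - Phi (a / q)) atBot (𝓝 0) :=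
    hlim.congr fun x => hconst x a
  have hzero : G a - Phi (a / q) = (0 : ℝ) :=
    tendsto_nhds_unique tendsto_const_nhds hconst'
  have : G a = Phi (a / q) := by linarith
  exact this
lemma integral_comp_z (f : ℝ → ℝ) (μ₁ σ : ℝ) (hσ : 0 < σ) :
    ∫ y : ℝ, f ((y - μ₁) / σ) = σ * ∫ t : ℝ, f t := by
  have h1 : (fun y : ℝ => f ((y - μ₁) / σ)) = fun y => (fun u : ℝ => f (u / σ)) (y + -μ₁) := by
    funext y; simp only [sub_eq_add_neg]
  rw [h1, integral_add_right_eq_self (fun u : ℝ => f (u / σ)) (-μ₁),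
    MeasureTheory.Measure.integral_comp_div f σ, abs_of_pos hσ, smul_eq_mul]

theorem GH_conditional_variance (μ₁ μ₂ σ ρ : ℝ) (hσ : 0 < σ) (hρ₁ : -1 < ρ) (hρ₂ : ρ < 1)
    (z ζ : ℝ → ℝ)
    (hz : ∀ y, z y = (y - μ₁) / σ)
    (hζ : ∀ y, ζ y = (μ₂ + ρ * z y) / Real.sqrt (1 - ρ ^ 2)) :
    (∫ y : ℝ, z y ^ 2 * ((1 / (σ * Phi μ₂)) * phi (z y) * Phi (ζ y)))
      - (∫ y : ℝ, z y * ((1 / (σ * Phi μ₂)) * phi (z y) * Phi (ζ y))) ^ 2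
      = 1 - ρ ^ 2 * (phi μ₂ / Phi μ₂) * (μ₂ + phi μ₂ / Phi μ₂) := by
  have hρ2 : ρ ^ 2 < 1 := by nlinarith
  set s := Real.sqrt (1 - ρ ^ 2) with hsdef
  have hs0 : 0 < s := Real.sqrt_pos.2 (by linarith)
  have hs2 : s ^ 2 = 1 - ρ ^ 2 := Real.sq_sqrt (by linarith)
  set a := μ₂ / s with hadef
  set b := ρ / s with hbdef
  set q := 1 / s with hqdef
  have hq0 : 0 < q := by rw [hqdef]; positivity
  have hq : q ^ 2 = 1 + b ^ 2 := by
    rw [hqdef, hbdef]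
    field_simp
    linarith [hs2]
  have haq : a / q = μ₂ := by rw [hadef, hqdef]; field_simp
  have hbq : b / q = ρ := by rw [hbdef, hqdef]; field_simp
  have hPhipos := Phi_pos μ₂
  have hζ' : ∀ y, ζ y = a + b * z y := by
    intro y
    rw [hζ y, hadef, hbdef]
    field_simp
  have hE1 : (∫ y : ℝ, z y * ((1 / (σ * Phi μ₂)) * phi (z y) * Phi (ζ y)))
      = σ * ∫ t : ℝ, t * ((1 / (σ * Phi μ₂)) * phi t * Phi (a + b * t)) := by
    have he : ∀ y : ℝ, z y * ((1 / (σ * Phi μ₂)) * phi (z y) * Phi (ζ y))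
        = (fun t : ℝ => t * ((1 / (σ * Phi μ₂)) * phi t * Phi (a + b * t))) ((y - μ₁) / σ) := by
      intro y; rw [hζ' y, hz y]
    simp_rw [he]
    exact integral_comp_z (fun t : ℝ => t * ((1 / (σ * Phi μ₂)) * phi t * Phi (a + b * t)))
      μ₁ σ hσ
  have hE2 : (∫ y : ℝ, z y ^ 2 * ((1 / (σ * Phi μ₂)) * phi (z y) * Phi (ζ y)))
      = σ * ∫ t : ℝ, t ^ 2 * ((1 / (σ * Phi μ₂)) * phi t * Phi (a + b * t)) := by
    have he : ∀ y : ℝ, z y ^ 2 * ((1 / (σ * Phi μ₂)) * phi (z y) * Phi (ζ y))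
        = (fun t : ℝ => t ^ 2 * ((1 / (σ * Phi μ₂)) * phi t * Phi (a + b * t))) ((y - μ₁) / σ) := by
      intro y; rw [hζ' y, hz y]
    simp_rw [he]
    exact integral_comp_z (fun t : ℝ => t ^ 2 * ((1 / (σ * Phi μ₂)) * phi t * Phi (a + b * t)))
      μ₁ σ hσ
  have hI1 : ∫ t : ℝ, t * ((1 / (σ * Phi μ₂)) * phi t * Phi (a + b * t))
      = 1 / (σ * Phi μ₂) * (ρ * phi μ₂) := by
    have h : ∀ t : ℝ, t * ((1 / (σ * Phi μ₂)) * phi t * Phi (a + b * t))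
        = 1 / (σ * Phi μ₂) * (t * phi t * Phi (a + b * t)) := fun t => by ring
    simp_rw [h]
    rw [integral_const_mul, I1_eq hq hq0 a, haq, hbq]
  have hI2 : ∫ t : ℝ, t ^ 2 * ((1 / (σ * Phi μ₂)) * phi t * Phi (a + b * t))
      = 1 / (σ * Phi μ₂) * (Phi μ₂ - ρ ^ 2 * μ₂ * phi μ₂) := by
    have h : ∀ t : ℝ, t ^ 2 * ((1 / (σ * Phi μ₂)) * phi t * Phi (a + b * t))
        = 1 / (σ * Phi μ₂) * (t ^ 2 * phi t * Phi (a + b * t)) := fun t => by ring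
    simp_rw [h]
    rw [integral_const_mul]
    have hsplit : ∫ t : ℝ, t ^ 2 * phi t * Phi (a + b * t)
        = (∫ t : ℝ, (t ^ 2 - 1) * phi t * Phi (a + b * t))
          + ∫ t : ℝ, phi t * Phi (a + b * t) := by
      rw [← integral_add (integrable_sqsub_phiPhi a b) (integrable_phiPhi a b)]
      congr 1; funext t; ring
    rw [hsplit, I2'_eq hq hq0 a, I0_eq hq hq0 a, haq, hbq]
    ring
  rw [hE1, hE2, hI1, hI2]
  field_simp
  ring
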